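/- Under the conditions of Lemma 3 (ℓ ≈ |log H|, u_H the solution of the averaged quasilocal problem, 𝐮_H(ω) the solution of the random quasilocal problem, both with right-hand side f ∈ L²(D)), the stochastic energy error satisfies E[‖∇(𝐮_H − u_H)‖²_{L²(D)}] ≤ C ℓ^{2d} · max_{T∈𝒯_H} E[X(T)²] · ‖f‖²_{L²(D)}, where X(T) measures the local fluctuation of the random quasilocal kernel 𝒜_H around its mean 𝒜̄_H := E[𝒜_H]. -/

import Mathlib

open MeasureTheory
open scoped RealInnerProductSpace

set_option maxHeartbeats 1600000

/-- Lemma 3: stochastic energy error of the averaged quasilocal model.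
The coarse mesh `𝒯_H` is modelled by a finite index set `ι` of cells of equal
measure `m T = |T|`; finite element functions are represented by their piecewise
constant gradients `p : ι → ℝ^d`, so that `‖∇v‖²_{L²(D)} = ∑_T m T ‖p T‖²`.
`G ω` is the random quasilocal kernel `𝒜_H(ω)` (values: `d×d` matrices as linear
maps), supported on patches `Nbr T` of cardinality `≲ ℓ^d` with finite overlap
(`ℓ ≈ |log H|` the oversampling parameter), `Gbar = E[𝒜_H]` its expectation, and
both induced bilinear forms are uniformly coercive with constant `c`.  The
right-hand side functional satisfies `|F(v)| ≤ C(D)‖f‖‖∇v‖` (Friedrichs).  With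
`X ω T := max_{K ∈ Nbr T} m T ‖𝒜_H(ω)|_{T,K} − 𝒜̄_H|_{T,K}‖`, the solutions
`𝐮_H(ω)` and `u_H` of the random and averaged quasilocal problems satisfy
`E[‖∇(𝐮_H − u_H)‖²_{L²(D)}] ≤ C ℓ^{2d} max_T E[X(T)²] ‖f‖²_{L²(D)}`
for a constant `C` depending only on `c`, `C(D)`, the overlap constant `A`
and `d`. -/
theorem stmt_8 (d : ℕ) (c CD A : ℝ) (hc : 0 < c) (hCD : 0 < CD) (hA : 0 < A) :
    ∃ C > 0, ∀ (ℓ : ℕ) (_hℓ : 1 ≤ ℓ)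
      (ι : Type) (_ : Fintype ι) (_ : Nonempty ι) (_ : DecidableEq ι)
      (Ω : Type) (_ : MeasurableSpace Ω) (μ : Measure Ω) (_ : IsProbabilityMeasure μ)
      (m : ι → ℝ) (_hm : ∀ T, 0 < m T) (_huni : ∀ T K : ι, m T = m K)
      (Nbr : ι → Finset ι) (hNbr : ∀ T, (Nbr T).Nonempty)
      (_hcard : ∀ T, ((Nbr T).card : ℝ) ≤ A * (ℓ : ℝ) ^ d)
      (_hover : ∀ K, ((Finset.univ.filter (fun T => K ∈ Nbr T)).card : ℝ) ≤ A * (ℓ : ℝ) ^ d)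
      (G : Ω → ι → ι → (EuclideanSpace ℝ (Fin d) →L[ℝ] EuclideanSpace ℝ (Fin d)))
      (Gbar : ι → ι → (EuclideanSpace ℝ (Fin d) →L[ℝ] EuclideanSpace ℝ (Fin d)))
      (_hGint : ∀ T K, Integrable (fun ω => G ω T K) μ)
      (_hGbar : ∀ T K, Gbar T K = ∫ ω, G ω T K ∂μ)
      (_hloc : ∀ ω T K, K ∉ Nbr T → G ω T K = 0)
      (_hcoer : ∀ ω (p : ι → EuclideanSpace ℝ (Fin d)),
        c * (∑ T, m T * ‖p T‖ ^ 2) ≤ ∑ T, ∑ K, m T * m K * ⟪p T, G ω T K (p K)⟫)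
      (_hcoerbar : ∀ p : ι → EuclideanSpace ℝ (Fin d),
        c * (∑ T, m T * ‖p T‖ ^ 2) ≤ ∑ T, ∑ K, m T * m K * ⟪p T, Gbar T K (p K)⟫)
      (fnorm : ℝ) (_hfnorm : 0 ≤ fnorm)
      (F : (ι → EuclideanSpace ℝ (Fin d)) → ℝ)
      (_hF : ∀ p : ι → EuclideanSpace ℝ (Fin d),
        |F p| ≤ CD * fnorm * Real.sqrt (∑ T, m T * ‖p T‖ ^ 2))
      (X : Ω → ι → ℝ)
      (_hX : ∀ ω T, X ω T = (Nbr T).sup' (hNbr T) (fun K => m T * ‖G ω T K - Gbar T K‖))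
      (_hXint : ∀ T, Integrable (fun ω => (X ω T) ^ 2) μ)
      (bu : Ω → ι → EuclideanSpace ℝ (Fin d)) (u : ι → EuclideanSpace ℝ (Fin d))
      (_hbu : ∀ ω (v : ι → EuclideanSpace ℝ (Fin d)),
        ∑ T, ∑ K, m T * m K * ⟪bu ω T, G ω T K (v K)⟫ = F v)
      (_hu : ∀ v : ι → EuclideanSpace ℝ (Fin d),
        ∑ T, ∑ K, m T * m K * ⟪u T, Gbar T K (v K)⟫ = F v)
      (_herrint : Integrable (fun ω => ∑ T, m T * ‖bu ω T - u T‖ ^ 2) μ),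
      ∫ ω, ∑ T, m T * ‖bu ω T - u T‖ ^ 2 ∂μ ≤
        C * (ℓ : ℝ) ^ (2 * d) *
          (Finset.univ.sup' Finset.univ_nonempty (fun T => ∫ ω, (X ω T) ^ 2 ∂μ)) *
          fnorm ^ 2 := by
  refine ⟨A ^ 2 * CD ^ 2 / c ^ 4,
    div_pos (mul_pos (pow_pos hA 2) (pow_pos hCD 2)) (pow_pos hc 4), ?_⟩
  intro ℓ hℓ ι iF iN iD Ω iM μ iP m hm huni Nbr hNbr hcard hover G Gbar hGint hGbar hloc
    hcoer hcoerbar fnorm hfnorm F hF X hX hXint bu u hbu hu herrint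
  have hlpos : (0:ℝ) < (ℓ : ℝ) := by exact_mod_cast hℓ
  have hlne : ((ℓ:ℝ) ^ d) ≠ 0 := (pow_pos hlpos d).ne'
  have hLd : (0:ℝ) < A * (ℓ:ℝ) ^ d := mul_pos hA (pow_pos hlpos d)
  -- bound on the averaged solution energy
  have hS0 : (0:ℝ) ≤ ∑ T, m T * ‖u T‖ ^ 2 :=
    Finset.sum_nonneg fun T _ => mul_nonneg (hm T).le (sq_nonneg _)
  have hSle : (∑ T, m T * ‖u T‖ ^ 2) ≤ (CD * fnorm / c) ^ 2 := by
    have h1 : c * (∑ T, m T * ‖u T‖ ^ 2) ≤ CD * fnorm * Real.sqrt (∑ T, m T * ‖u T‖ ^ 2) := by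
      calc c * (∑ T, m T * ‖u T‖ ^ 2)
          ≤ ∑ T, ∑ K, m T * m K * ⟪u T, Gbar T K (u K)⟫ := hcoerbar u
        _ = F u := hu u
        _ ≤ |F u| := le_abs_self _
        _ ≤ CD * fnorm * Real.sqrt (∑ T, m T * ‖u T‖ ^ 2) := hF u
    have hsq : Real.sqrt (∑ T, m T * ‖u T‖ ^ 2) ^ 2 = ∑ T, m T * ‖u T‖ ^ 2 :=
      Real.sq_sqrt hS0
    have h2 : Real.sqrt (∑ T, m T * ‖u T‖ ^ 2) ≤ CD * fnorm / c := by
      rcases (Real.sqrt_nonneg (∑ T, m T * ‖u T‖ ^ 2)).eq_or_lt with h | h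
      · rw [← h]; exact div_nonneg (mul_nonneg hCD.le hfnorm) hc.le
      · rw [le_div_iff₀ hc]
        nlinarith [h1, hsq]
    calc (∑ T, m T * ‖u T‖ ^ 2) = Real.sqrt (∑ T, m T * ‖u T‖ ^ 2) ^ 2 := hsq.symm
      _ ≤ (CD * fnorm / c) ^ 2 := pow_le_pow_left₀ (Real.sqrt_nonneg _) h2 2
  set t : ℝ := c / (A * (ℓ:ℝ) ^ d) with htdef
  have ht0 : (0:ℝ) < t := div_pos hc hLd
  have hGbar0 : ∀ T K, K ∉ Nbr T → Gbar T K = 0 := by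
    intro T K hK
    rw [hGbar T K]
    have h0 : (fun ω => G ω T K) = fun _ => 0 := funext fun ω => hloc ω T K hK
    rw [h0, integral_zero]
  -- pointwise (in ω) energy error bound
  have hpt : ∀ ω, (∑ T, m T * ‖bu ω T - u T‖ ^ 2) ≤
      (A ^ 2 * (ℓ:ℝ) ^ (2 * d) / c ^ 2) * ∑ T, m T * ‖u T‖ ^ 2 * X ω T ^ 2 := by
    intro ω
    set e : ι → EuclideanSpace ℝ (Fin d) := fun K => bu ω K - u K with he
    have hN0 : (0:ℝ) ≤ ∑ T, m T * ‖e T‖ ^ 2 :=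
      Finset.sum_nonneg fun T _ => mul_nonneg (hm T).le (sq_nonneg _)
    have hsplit : (∑ T, ∑ K, m T * m K * ⟪e T, G ω T K (e K)⟫)
        = ∑ T, ∑ K, m T * m K * ⟪u T, (Gbar T K - G ω T K) (e K)⟫ := by
      have e1 : ∀ T K, m T * m K * ⟪e T, G ω T K (e K)⟫
          = m T * m K * ⟪bu ω T, G ω T K (e K)⟫ - m T * m K * ⟪u T, G ω T K (e K)⟫ := by
        intro T K
        have hee : e T = bu ω T - u T := rfl
        rw [hee, inner_sub_left]; ring
      have e2 : ∀ T K, m T * m K * ⟪u T, (Gbar T K - G ω T K) (e K)⟫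
          = m T * m K * ⟪u T, Gbar T K (e K)⟫ - m T * m K * ⟪u T, G ω T K (e K)⟫ := by
        intro T K
        rw [ContinuousLinearMap.sub_apply, inner_sub_right]; ring
      calc (∑ T, ∑ K, m T * m K * ⟪e T, G ω T K (e K)⟫)
          = ∑ T, ∑ K, (m T * m K * ⟪bu ω T, G ω T K (e K)⟫
              - m T * m K * ⟪u T, G ω T K (e K)⟫) :=
            Finset.sum_congr rfl fun T _ => Finset.sum_congr rfl fun K _ => e1 T K
        _ = (∑ T, ∑ K, m T * m K * ⟪bu ω T, G ω T K (e K)⟫)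
            - ∑ T, ∑ K, m T * m K * ⟪u T, G ω T K (e K)⟫ := by
            rw [← Finset.sum_sub_distrib]
            exact Finset.sum_congr rfl fun T _ => Finset.sum_sub_distrib _ _
        _ = F e - ∑ T, ∑ K, m T * m K * ⟪u T, G ω T K (e K)⟫ := by rw [hbu ω e]
        _ = (∑ T, ∑ K, m T * m K * ⟪u T, Gbar T K (e K)⟫)
            - ∑ T, ∑ K, m T * m K * ⟪u T, G ω T K (e K)⟫ := by rw [hu e]
        _ = ∑ T, ∑ K, m T * m K * ⟪u T, (Gbar T K - G ω T K) (e K)⟫ := by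
            rw [← Finset.sum_sub_distrib]
            refine Finset.sum_congr rfl fun T _ => ?_
            rw [← Finset.sum_sub_distrib]
            exact Finset.sum_congr rfl fun K _ => (e2 T K).symm
    have hres : (∑ T, ∑ K, m T * m K * ⟪u T, (Gbar T K - G ω T K) (e K)⟫)
        = ∑ T, ∑ K ∈ Nbr T, m T * m K * ⟪u T, (Gbar T K - G ω T K) (e K)⟫ := by
      refine Finset.sum_congr rfl fun T _ => ?_
      refine (Finset.sum_subset (Finset.subset_univ _) fun K _ hK => ?_).symm
      simp [hGbar0 T K hK, hloc ω T K hK]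
    have hterm : ∀ T, ∀ K ∈ Nbr T,
        m T * m K * ⟪u T, (Gbar T K - G ω T K) (e K)⟫ ≤
          m K * ((X ω T * ‖u T‖) ^ 2 / (2 * t)) + m K * (t / 2 * ‖e K‖ ^ 2) := by
      intro T K hK
      have hDnorm : ⟪u T, (Gbar T K - G ω T K) (e K)⟫
          ≤ ‖u T‖ * (‖G ω T K - Gbar T K‖ * ‖e K‖) := by
        calc ⟪u T, (Gbar T K - G ω T K) (e K)⟫
            ≤ ‖u T‖ * ‖(Gbar T K - G ω T K) (e K)‖ := real_inner_le_norm _ _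
          _ ≤ ‖u T‖ * (‖Gbar T K - G ω T K‖ * ‖e K‖) :=
              mul_le_mul_of_nonneg_left ((Gbar T K - G ω T K).le_opNorm (e K)) (norm_nonneg _)
          _ = ‖u T‖ * (‖G ω T K - Gbar T K‖ * ‖e K‖) := by rw [norm_sub_rev]
      have hXb : m T * ‖G ω T K - Gbar T K‖ ≤ X ω T := by
        rw [hX ω T]
        exact Finset.le_sup' (fun K => m T * ‖G ω T K - Gbar T K‖) hK
      have step1 : m T * m K * ⟪u T, (Gbar T K - G ω T K) (e K)⟫
          ≤ m K * (X ω T * ‖u T‖ * ‖e K‖) := by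
        have h1 : m T * m K * ⟪u T, (Gbar T K - G ω T K) (e K)⟫
            ≤ m T * m K * (‖u T‖ * (‖G ω T K - Gbar T K‖ * ‖e K‖)) :=
          mul_le_mul_of_nonneg_left hDnorm (mul_nonneg (hm T).le (hm K).le)
        have h3 : m K * (‖u T‖ * ‖e K‖) * (m T * ‖G ω T K - Gbar T K‖)
            ≤ m K * (‖u T‖ * ‖e K‖) * X ω T :=
          mul_le_mul_of_nonneg_left hXb (mul_nonneg (hm K).le (mul_nonneg (norm_nonneg _) (norm_nonneg _)))
        calc m T * m K * ⟪u T, (Gbar T K - G ω T K) (e K)⟫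
            ≤ m T * m K * (‖u T‖ * (‖G ω T K - Gbar T K‖ * ‖e K‖)) := h1
          _ = m K * (‖u T‖ * ‖e K‖) * (m T * ‖G ω T K - Gbar T K‖) := by ring
          _ ≤ m K * (‖u T‖ * ‖e K‖) * X ω T := h3
          _ = m K * (X ω T * ‖u T‖ * ‖e K‖) := by ring
      have h2t : (0:ℝ) < 2 * t := by linarith
      have young : X ω T * ‖u T‖ * ‖e K‖
          ≤ (X ω T * ‖u T‖) ^ 2 / (2 * t) + t / 2 * ‖e K‖ ^ 2 := by
        have h4 : 2 * t * (X ω T * ‖u T‖ * ‖e K‖)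
            ≤ (X ω T * ‖u T‖) ^ 2 + t ^ 2 * ‖e K‖ ^ 2 := by
          nlinarith [sq_nonneg (X ω T * ‖u T‖ - t * ‖e K‖)]
        have h5 : X ω T * ‖u T‖ * ‖e K‖
            ≤ ((X ω T * ‖u T‖) ^ 2 + t ^ 2 * ‖e K‖ ^ 2) / (2 * t) := by
          rw [le_div_iff₀ h2t]; nlinarith [h4]
        calc X ω T * ‖u T‖ * ‖e K‖
            ≤ ((X ω T * ‖u T‖) ^ 2 + t ^ 2 * ‖e K‖ ^ 2) / (2 * t) := h5
          _ = (X ω T * ‖u T‖) ^ 2 / (2 * t) + t / 2 * ‖e K‖ ^ 2 := by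
            field_simp
      calc m T * m K * ⟪u T, (Gbar T K - G ω T K) (e K)⟫
          ≤ m K * (X ω T * ‖u T‖ * ‖e K‖) := step1
        _ ≤ m K * ((X ω T * ‖u T‖) ^ 2 / (2 * t) + t / 2 * ‖e K‖ ^ 2) :=
            mul_le_mul_of_nonneg_left young (hm K).le
        _ = m K * ((X ω T * ‖u T‖) ^ 2 / (2 * t)) + m K * (t / 2 * ‖e K‖ ^ 2) := by ring
    have hsum1 : (∑ T, ∑ K ∈ Nbr T, m K * ((X ω T * ‖u T‖) ^ 2 / (2 * t)))
        ≤ (A * (ℓ:ℝ) ^ d / (2 * t)) * ∑ T, m T * ‖u T‖ ^ 2 * X ω T ^ 2 := by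
      have hTb : ∀ T, (∑ K ∈ Nbr T, m K * ((X ω T * ‖u T‖) ^ 2 / (2 * t)))
          ≤ (A * (ℓ:ℝ) ^ d / (2 * t)) * (m T * ‖u T‖ ^ 2 * X ω T ^ 2) := by
        intro T
        have hm' : (∑ K ∈ Nbr T, m K) = ((Nbr T).card : ℝ) * m T := by
          rw [Finset.sum_congr rfl fun K _ => huni K T, Finset.sum_const, nsmul_eq_mul]
        have hnn : (0:ℝ) ≤ m T * ((X ω T * ‖u T‖) ^ 2 / (2 * t)) :=
          mul_nonneg (hm T).le (div_nonneg (sq_nonneg _) (by linarith))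
        calc (∑ K ∈ Nbr T, m K * ((X ω T * ‖u T‖) ^ 2 / (2 * t)))
            = (∑ K ∈ Nbr T, m K) * ((X ω T * ‖u T‖) ^ 2 / (2 * t)) :=
              (Finset.sum_mul _ _ _).symm
          _ = ((Nbr T).card : ℝ) * (m T * ((X ω T * ‖u T‖) ^ 2 / (2 * t))) := by
              rw [hm']; ring
          _ ≤ (A * (ℓ:ℝ) ^ d) * (m T * ((X ω T * ‖u T‖) ^ 2 / (2 * t))) :=
              mul_le_mul_of_nonneg_right (hcard T) hnn
          _ = (A * (ℓ:ℝ) ^ d / (2 * t)) * (m T * ‖u T‖ ^ 2 * X ω T ^ 2) := by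
              rw [mul_pow]; ring
      calc (∑ T, ∑ K ∈ Nbr T, m K * ((X ω T * ‖u T‖) ^ 2 / (2 * t)))
          ≤ ∑ T, (A * (ℓ:ℝ) ^ d / (2 * t)) * (m T * ‖u T‖ ^ 2 * X ω T ^ 2) :=
            Finset.sum_le_sum fun T _ => hTb T
        _ = (A * (ℓ:ℝ) ^ d / (2 * t)) * ∑ T, m T * ‖u T‖ ^ 2 * X ω T ^ 2 :=
            (Finset.mul_sum _ _ _).symm
    have hswap : (∑ T, ∑ K ∈ Nbr T, m K * (t / 2 * ‖e K‖ ^ 2))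
        = ∑ K, ((Finset.univ.filter (fun T => K ∈ Nbr T)).card : ℝ)
            * (m K * (t / 2 * ‖e K‖ ^ 2)) := by
      calc (∑ T, ∑ K ∈ Nbr T, m K * (t / 2 * ‖e K‖ ^ 2))
          = ∑ T, ∑ K, if K ∈ Nbr T then m K * (t / 2 * ‖e K‖ ^ 2) else 0 := by
            refine Finset.sum_congr rfl fun T _ => ?_
            rw [Finset.sum_ite_mem, Finset.univ_inter]
        _ = ∑ K, ∑ T, if K ∈ Nbr T then m K * (t / 2 * ‖e K‖ ^ 2) else 0 := Finset.sum_comm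
        _ = ∑ K, ((Finset.univ.filter (fun T => K ∈ Nbr T)).card : ℝ)
            * (m K * (t / 2 * ‖e K‖ ^ 2)) := by
            refine Finset.sum_congr rfl fun K _ => ?_
            rw [Finset.sum_ite, Finset.sum_const, Finset.sum_const_zero, add_zero, nsmul_eq_mul]
    have hsum2 : (∑ T, ∑ K ∈ Nbr T, m K * (t / 2 * ‖e K‖ ^ 2))
        ≤ (c / 2) * ∑ K, m K * ‖e K‖ ^ 2 := by
      rw [hswap]
      have hbd : ∀ K, ((Finset.univ.filter (fun T => K ∈ Nbr T)).card : ℝ)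
          * (m K * (t / 2 * ‖e K‖ ^ 2)) ≤ (A * (ℓ:ℝ) ^ d) * (m K * (t / 2 * ‖e K‖ ^ 2)) :=
        fun K => mul_le_mul_of_nonneg_right (hover K)
          (mul_nonneg (hm K).le (mul_nonneg (by linarith) (sq_nonneg _)))
      calc (∑ K, ((Finset.univ.filter (fun T => K ∈ Nbr T)).card : ℝ)
            * (m K * (t / 2 * ‖e K‖ ^ 2)))
          ≤ ∑ K, (A * (ℓ:ℝ) ^ d) * (m K * (t / 2 * ‖e K‖ ^ 2)) :=
            Finset.sum_le_sum fun K _ => hbd K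
        _ = (c / 2) * ∑ K, m K * ‖e K‖ ^ 2 := by
            rw [Finset.mul_sum]
            refine Finset.sum_congr rfl fun K _ => ?_
            rw [htdef]
            field_simp [hc.ne', hA.ne', hlne]
    have hmain : c * (∑ T, m T * ‖e T‖ ^ 2)
        ≤ (A * (ℓ:ℝ) ^ d / (2 * t)) * (∑ T, m T * ‖u T‖ ^ 2 * X ω T ^ 2)
          + (c / 2) * ∑ T, m T * ‖e T‖ ^ 2 := by
      calc c * (∑ T, m T * ‖e T‖ ^ 2)
          ≤ ∑ T, ∑ K, m T * m K * ⟪e T, G ω T K (e K)⟫ := hcoer ω e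
        _ = ∑ T, ∑ K ∈ Nbr T, m T * m K * ⟪u T, (Gbar T K - G ω T K) (e K)⟫ := by
            rw [hsplit, hres]
        _ ≤ ∑ T, ∑ K ∈ Nbr T, (m K * ((X ω T * ‖u T‖) ^ 2 / (2 * t))
              + m K * (t / 2 * ‖e K‖ ^ 2)) :=
            Finset.sum_le_sum fun T _ => Finset.sum_le_sum fun K hK => hterm T K hK
        _ = (∑ T, ∑ K ∈ Nbr T, m K * ((X ω T * ‖u T‖) ^ 2 / (2 * t)))
            + ∑ T, ∑ K ∈ Nbr T, m K * (t / 2 * ‖e K‖ ^ 2) := by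
            rw [← Finset.sum_add_distrib]
            exact Finset.sum_congr rfl fun T _ => Finset.sum_add_distrib
        _ ≤ (A * (ℓ:ℝ) ^ d / (2 * t)) * (∑ T, m T * ‖u T‖ ^ 2 * X ω T ^ 2)
            + (c / 2) * ∑ T, m T * ‖e T‖ ^ 2 := add_le_add hsum1 hsum2
    have hPnn : (0:ℝ) ≤ ∑ T, m T * ‖u T‖ ^ 2 * X ω T ^ 2 :=
      Finset.sum_nonneg fun T _ => mul_nonneg (mul_nonneg (hm T).le (sq_nonneg _)) (sq_nonneg _)
    have hcoef : A * (ℓ:ℝ) ^ d / (2 * t) = A ^ 2 * (ℓ:ℝ) ^ (2 * d) / (2 * c) := by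
      rw [htdef, two_mul d, pow_add]
      field_simp [hc.ne', hA.ne', hlne]
    show (∑ T, m T * ‖e T‖ ^ 2)
        ≤ (A ^ 2 * (ℓ:ℝ) ^ (2 * d) / c ^ 2) * ∑ T, m T * ‖u T‖ ^ 2 * X ω T ^ 2
    have h5 : (c / 2) * (∑ T, m T * ‖e T‖ ^ 2)
        ≤ (A ^ 2 * (ℓ:ℝ) ^ (2 * d) / (2 * c)) * ∑ T, m T * ‖u T‖ ^ 2 * X ω T ^ 2 := by
      rw [← hcoef]; linarith [hmain]
    have hNr : (∑ T, m T * ‖e T‖ ^ 2) = (2 / c) * ((c / 2) * ∑ T, m T * ‖e T‖ ^ 2) := by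
      have hone : (2 / c) * (c / 2) = 1 := by
        field_simp
      rw [← mul_assoc, hone, one_mul]
    rw [hNr]
    calc (2 / c) * ((c / 2) * ∑ T, m T * ‖e T‖ ^ 2)
        ≤ (2 / c) * ((A ^ 2 * (ℓ:ℝ) ^ (2 * d) / (2 * c))
            * ∑ T, m T * ‖u T‖ ^ 2 * X ω T ^ 2) :=
          mul_le_mul_of_nonneg_left h5 (div_nonneg (by norm_num) hc.le)
      _ = (A ^ 2 * (ℓ:ℝ) ^ (2 * d) / c ^ 2) * ∑ T, m T * ‖u T‖ ^ 2 * X ω T ^ 2 := by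
          field_simp [hc.ne']
  -- integrate the pointwise bound
  have hPint : Integrable (fun ω => ∑ T, m T * ‖u T‖ ^ 2 * X ω T ^ 2) μ :=
    integrable_finset_sum _ fun T _ => (hXint T).const_mul _
  have hint1 : (∫ ω, ∑ T, m T * ‖bu ω T - u T‖ ^ 2 ∂μ)
      ≤ ∫ ω, (A ^ 2 * (ℓ:ℝ) ^ (2 * d) / c ^ 2)
          * ∑ T, m T * ‖u T‖ ^ 2 * X ω T ^ 2 ∂μ :=
    integral_mono herrint (hPint.const_mul _) hpt
  have hint2 : (∫ ω, (A ^ 2 * (ℓ:ℝ) ^ (2 * d) / c ^ 2)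
        * ∑ T, m T * ‖u T‖ ^ 2 * X ω T ^ 2 ∂μ)
      = (A ^ 2 * (ℓ:ℝ) ^ (2 * d) / c ^ 2)
        * ∑ T, (m T * ‖u T‖ ^ 2) * ∫ ω, X ω T ^ 2 ∂μ := by
    rw [integral_const_mul, integral_finset_sum _ fun T _ => (hXint T).const_mul _]
    congr 1
    exact Finset.sum_congr rfl fun T _ => integral_const_mul _ _
  set M : ℝ := Finset.univ.sup' Finset.univ_nonempty (fun T => ∫ ω, (X ω T) ^ 2 ∂μ)
    with hMdef
  have hM0 : (0:ℝ) ≤ M := by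
    obtain ⟨T⟩ := iN
    exact le_trans (integral_nonneg fun ω => sq_nonneg _)
      (Finset.le_sup' (fun T => ∫ ω, (X ω T) ^ 2 ∂μ) (Finset.mem_univ T))
  have hsum3 : (∑ T, (m T * ‖u T‖ ^ 2) * ∫ ω, X ω T ^ 2 ∂μ)
      ≤ M * ∑ T, m T * ‖u T‖ ^ 2 := by
    calc (∑ T, (m T * ‖u T‖ ^ 2) * ∫ ω, X ω T ^ 2 ∂μ)
        ≤ ∑ T, (m T * ‖u T‖ ^ 2) * M :=
          Finset.sum_le_sum fun T _ => mul_le_mul_of_nonneg_left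
            (Finset.le_sup' (fun T => ∫ ω, (X ω T) ^ 2 ∂μ) (Finset.mem_univ T))
            (mul_nonneg (hm T).le (sq_nonneg _))
      _ = M * ∑ T, m T * ‖u T‖ ^ 2 := by
          rw [← Finset.sum_mul, mul_comm]
  have hCpt : (0:ℝ) ≤ A ^ 2 * (ℓ:ℝ) ^ (2 * d) / c ^ 2 := by positivity
  calc (∫ ω, ∑ T, m T * ‖bu ω T - u T‖ ^ 2 ∂μ)
      ≤ (A ^ 2 * (ℓ:ℝ) ^ (2 * d) / c ^ 2)
          * ∑ T, (m T * ‖u T‖ ^ 2) * ∫ ω, X ω T ^ 2 ∂μ := by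
        rw [← hint2]; exact hint1
    _ ≤ (A ^ 2 * (ℓ:ℝ) ^ (2 * d) / c ^ 2) * (M * ∑ T, m T * ‖u T‖ ^ 2) :=
        mul_le_mul_of_nonneg_left hsum3 hCpt
    _ ≤ (A ^ 2 * (ℓ:ℝ) ^ (2 * d) / c ^ 2) * (M * (CD * fnorm / c) ^ 2) :=
        mul_le_mul_of_nonneg_left (mul_le_mul_of_nonneg_left hSle hM0) hCpt
    _ = A ^ 2 * CD ^ 2 / c ^ 4 * (ℓ:ℝ) ^ (2 * d) * M * fnorm ^ 2 := by
        field_simp [hc.ne']
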